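/- arXiv:1212.2834 — 2 statements merged into one kernel-verified Lean document; each statement's English description precedes it below -/
import Mathlib

section
/- Let Δ be a nonzero n×L matrix with Δ ∈ Null(Φ) ∩ 𝒦 ∩ 𝒫, and let X ∈ 𝒦 ∩ 𝒫 be a matrix whose support contains the support of Δ (i.e. Δ_{i,l} ≠ 0 implies X_{i,l} ≠ 0). Then for every λ ∈ ℝ, the matrix X + λΔ belongs to 𝒦 ∩ 𝒫 and satisfies ‖Y − Φ(X + λΔ)‖_F = ‖Y − ΦX‖_F. Consequently, if such an X is a minimizer of ‖Y − ΦΘ‖_F² over Θ ∈ 𝒦 ∩ 𝒫, then the set of minimizers is unbounded. -/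
/-- Frobenius norm of a real matrix. -/
noncomputable def frob {a b : ℕ} (A : Matrix (Fin a) (Fin b) ℝ) : ℝ :=
  Real.sqrt (∑ i, ∑ j, (A i j) ^ 2)

/-- The set of a×b matrices whose every column has at most k nonzero entries. -/
def colSparse (a b k : ℕ) : Set (Matrix (Fin a) (Fin b) ℝ) :=
  {Θ | ∀ l, ({i | Θ i l ≠ 0} : Set (Fin a)).ncard ≤ k}

/-- The set of a×b matrices having at most p nonzero rows. -/
def rowSparse (a b p : ℕ) : Set (Matrix (Fin a) (Fin b) ℝ) :=
  {Θ | ({i | ∃ l, Θ i l ≠ 0} : Set (Fin a)).ncard ≤ p}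

lemma abs_entry_le_frob {a b : ℕ} (A : Matrix (Fin a) (Fin b) ℝ) (i : Fin a) (j : Fin b) :
    |A i j| ≤ frob A := by
  rw [frob, ← Real.sqrt_sq_eq_abs]
  apply Real.sqrt_le_sqrt
  calc (A i j) ^ 2 ≤ ∑ j', (A i j') ^ 2 :=
        Finset.single_le_sum (f := fun j' => (A i j') ^ 2) (fun _ _ => sq_nonneg _) (Finset.mem_univ j)
    _ ≤ ∑ i', ∑ j', (A i' j') ^ 2 :=
        Finset.single_le_sum (f := fun i' => ∑ j', (A i' j') ^ 2)
          (fun _ _ => Finset.sum_nonneg fun _ _ => sq_nonneg _) (Finset.mem_univ i)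

theorem stmt_2 (m n L k p : ℕ) (hm : 0 < m) (hn : 0 < n) (hL : 0 < L)
    (hk : 0 < k) (hp : 0 < p)
    (Φ : Matrix (Fin m) (Fin n) ℝ) (Y : Matrix (Fin m) (Fin L) ℝ)
    (Δ X : Matrix (Fin n) (Fin L) ℝ)
    (hΔ0 : Δ ≠ 0)
    (hΔnull : Φ * Δ = 0)
    (hΔ : Δ ∈ colSparse n L k ∩ rowSparse n L p)
    (hX : X ∈ colSparse n L k ∩ rowSparse n L p)
    (hsupp : ∀ i l, Δ i l ≠ 0 → X i l ≠ 0) :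
    (∀ lam : ℝ,
      X + lam • Δ ∈ colSparse n L k ∩ rowSparse n L p ∧
      frob (Y - Φ * (X + lam • Δ)) = frob (Y - Φ * X)) ∧
    ((∀ Θ ∈ colSparse n L k ∩ rowSparse n L p,
        frob (Y - Φ * X) ≤ frob (Y - Φ * Θ)) →
      ∀ C : ℝ, ∃ Z ∈ colSparse n L k ∩ rowSparse n L p,
        (∀ Θ ∈ colSparse n L k ∩ rowSparse n L p,
          frob (Y - Φ * Z) ≤ frob (Y - Φ * Θ)) ∧ C < frob Z) := by
  have hsub : ∀ lam : ℝ, ∀ i l, (X + lam • Δ) i l ≠ 0 → X i l ≠ 0 := by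
    intro lam i l h hx
    have hd : Δ i l = 0 := by
      by_contra hd; exact hsupp i l hd hx
    apply h
    simp [Matrix.add_apply, Matrix.smul_apply, hx, hd]
  have hmem : ∀ lam : ℝ, X + lam • Δ ∈ colSparse n L k ∩ rowSparse n L p := by
    intro lam
    constructor
    · intro l
      refine le_trans (Set.ncard_le_ncard ?_ (Set.toFinite _)) (hX.1 l)
      intro i hi
      exact hsub lam i l hi
    · refine le_trans (Set.ncard_le_ncard ?_ (Set.toFinite _)) hX.2
      rintro i ⟨l, hl⟩
      exact ⟨l, hsub lam i l hl⟩
  have hmul : ∀ lam : ℝ, Φ * (X + lam • Δ) = Φ * X := by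
    intro lam
    rw [Matrix.mul_add, Matrix.mul_smul, hΔnull, smul_zero, add_zero]
  refine ⟨fun lam => ⟨hmem lam, by rw [hmul]⟩, ?_⟩
  intro hmin C
  obtain ⟨i0, l0, hd0⟩ : ∃ i l, Δ i l ≠ 0 := by
    by_contra h
    push_neg at h
    exact hΔ0 (by ext i l; simpa using h i l)
  set lam : ℝ := (|C| + 1 - X i0 l0) / Δ i0 l0 with hlam
  refine ⟨X + lam • Δ, hmem lam, fun Θ hΘ => by rw [hmul]; exact hmin Θ hΘ, ?_⟩
  have hentry : (X + lam • Δ) i0 l0 = |C| + 1 := by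
    simp only [Matrix.add_apply, Matrix.smul_apply, hlam, smul_eq_mul]
    field_simp
    ring
  calc C ≤ |C| := le_abs_self C
    _ < |C| + 1 := by linarith
    _ = |(X + lam • Δ) i0 l0| := by rw [hentry, abs_of_nonneg (by positivity : (0:ℝ) ≤ |C| + 1)]
    _ ≤ frob (X + lam • Δ) := abs_entry_le_frob _ _ _
end

section
/- Suppose Null(Φ) ∩ 𝒦 ∩ 𝒫 = {0}. Then every sequence (X_i)_{i∈ℕ} of real n×L matrices such that X_i ∈ 𝒦 ∩ 𝒫 and ‖Y − ΦX_i‖_F ≤ ‖Y‖_F for every i is bounded and has a convergent subsequence; moreover every such subsequential limit X* satisfies X* ∈ 𝒦 ∩ 𝒫 and ‖Y − ΦX*‖_F ≤ ‖Y‖_F. -/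
noncomputable def eMat {a b : ℕ} (A : Matrix (Fin a) (Fin b) ℝ) :
    EuclideanSpace ℝ (Fin a × Fin b) := WithLp.toLp 2 (fun p : Fin a × Fin b => A p.1 p.2)

noncomputable def eInv {a b : ℕ} (x : EuclideanSpace ℝ (Fin a × Fin b)) :
    Matrix (Fin a) (Fin b) ℝ := fun i j => x (i, j)

lemma eInv_eMat {a b : ℕ} (A : Matrix (Fin a) (Fin b) ℝ) : eInv (eMat A) = A := rfl

lemma eMat_continuous {a b : ℕ} :
    Continuous (eMat : Matrix (Fin a) (Fin b) ℝ → EuclideanSpace ℝ (Fin a × Fin b)) := by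
  unfold eMat; fun_prop

lemma eInv_continuous {a b : ℕ} :
    Continuous (eInv : EuclideanSpace ℝ (Fin a × Fin b) → Matrix (Fin a) (Fin b) ℝ) := by
  unfold eInv; fun_prop

lemma mulPhi_continuous {m n L : ℕ} (Φ : Matrix (Fin m) (Fin n) ℝ) :
    Continuous (fun A : Matrix (Fin n) (Fin L) ℝ => Φ * A) :=
  continuous_const.matrix_mul continuous_id

lemma frob_eq_norm {a b : ℕ} (A : Matrix (Fin a) (Fin b) ℝ) : frob A = ‖eMat A‖ := by
  rw [EuclideanSpace.norm_eq]
  simp [frob, Fintype.sum_prod_type, eMat, sq_abs]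

lemma frob_nonneg {a b : ℕ} (A : Matrix (Fin a) (Fin b) ℝ) : 0 ≤ frob A :=
  Real.sqrt_nonneg _

lemma frob_add_le {a b : ℕ} (A B : Matrix (Fin a) (Fin b) ℝ) :
    frob (A + B) ≤ frob A + frob B := by
  rw [frob_eq_norm, frob_eq_norm, frob_eq_norm]
  exact norm_add_le (eMat A) (eMat B)

lemma frob_neg {a b : ℕ} (A : Matrix (Fin a) (Fin b) ℝ) : frob (-A) = frob A := by
  rw [frob_eq_norm, frob_eq_norm]
  exact norm_neg (eMat A)

lemma frob_sub_le {a b : ℕ} (A B : Matrix (Fin a) (Fin b) ℝ) :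
    frob (A - B) ≤ frob A + frob B := by
  rw [sub_eq_add_neg]
  exact (frob_add_le A (-B)).trans (by rw [frob_neg])

lemma frob_smul {a b : ℕ} (c : ℝ) (A : Matrix (Fin a) (Fin b) ℝ) :
    frob (c • A) = |c| * frob A := by
  rw [frob_eq_norm, frob_eq_norm]
  have : eMat (c • A) = c • eMat A := rfl
  rw [this, norm_smul, Real.norm_eq_abs]

lemma frob_eq_zero {a b : ℕ} {A : Matrix (Fin a) (Fin b) ℝ} (h : frob A = 0) : A = 0 := by
  rw [frob_eq_norm, norm_eq_zero] at h
  ext i j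
  exact congrFun (congrArg WithLp.ofLp h) (i, j)

lemma frob_continuous {a b : ℕ} : Continuous (fun A : Matrix (Fin a) (Fin b) ℝ => frob A) := by
  unfold frob
  exact Real.continuous_sqrt.comp (by fun_prop)

/-- Generic: a bound on number of indices where a continuous family is nonzero is closed. -/
lemma closed_supp {a k : ℕ} {M : Type*} [TopologicalSpace M] (g : Fin a → M → ℝ)
    (hg : ∀ i, Continuous (g i)) :
    IsClosed {x : M | ({i | g i x ≠ 0} : Set (Fin a)).ncard ≤ k} := by
  have heq : {x : M | ({i | g i x ≠ 0} : Set (Fin a)).ncard ≤ k}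
      = ⋃ s ∈ {s : Finset (Fin a) | s.card ≤ k}, ⋂ i ∈ (sᶜ : Finset (Fin a)), {x | g i x = 0} := by
    ext x
    simp only [Set.mem_setOf_eq, Set.mem_iUnion, Set.mem_iInter, Finset.mem_compl]
    constructor
    · intro h
      refine ⟨(Set.toFinite {i | g i x ≠ 0}).toFinset, ?_, ?_⟩
      · rwa [← Set.ncard_eq_toFinset_card]
      · intro i hi
        by_contra hne
        exact hi ((Set.Finite.mem_toFinset _).2 hne)
    · rintro ⟨s, hs, hsub⟩
      have : {i | g i x ≠ 0} ⊆ (s : Set (Fin a)) := by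
        intro i hi
        by_contra hin
        exact hi (hsub i (by simpa using hin))
      calc ({i | g i x ≠ 0} : Set (Fin a)).ncard ≤ (s : Set (Fin a)).ncard :=
            Set.ncard_le_ncard this (s : Set (Fin a)).toFinite
        _ = s.card := by simp [Set.ncard_coe_finset]
        _ ≤ k := hs
  rw [heq]
  apply Set.Finite.isClosed_biUnion (Set.toFinite _)
  intro s _
  apply isClosed_biInter
  intro i _
  exact isClosed_eq (hg i) continuous_const

lemma colSparse_closed (a b k : ℕ) : IsClosed (colSparse a b k) := by
  have : colSparse a b k = ⋂ l : Fin b,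
      {A : Matrix (Fin a) (Fin b) ℝ | ({i | A i l ≠ 0} : Set (Fin a)).ncard ≤ k} := by
    ext A; simp [colSparse, Set.mem_iInter]
  rw [this]
  exact isClosed_iInter fun l => closed_supp (fun i (A : Matrix (Fin a) (Fin b) ℝ) => A i l)
    (fun i => ((continuous_apply l).comp (continuous_apply i)))

lemma rowSparse_closed (a b p : ℕ) : IsClosed (rowSparse a b p) := by
  have : rowSparse a b p =
      {A : Matrix (Fin a) (Fin b) ℝ | ({i | (fun i A => ∑ l, (A i l) ^ 2) i A ≠ 0}
        : Set (Fin a)).ncard ≤ p} := by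
    ext A
    simp only [rowSparse, Set.mem_setOf_eq]
    have : ∀ i : Fin a, (∃ l, A i l ≠ 0) ↔ (∑ l, (A i l) ^ 2 ≠ 0) := by
      intro i
      constructor
      · rintro ⟨l, hl⟩ hsum
        have := (Finset.sum_eq_zero_iff_of_nonneg (fun j _ => sq_nonneg (A i j))).1 hsum
          l (Finset.mem_univ l)
        exact hl (by nlinarith)
      · intro hsum
        by_contra h
        push_neg at h
        exact hsum (Finset.sum_eq_zero fun l _ => by rw [h l]; ring)
    simp only [this]
  rw [this]
  exact closed_supp _ (fun i => by fun_prop)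

/-- scalar multiples stay sparse -/
lemma smul_mem_sparse {a b k p : ℕ} (c : ℝ) {A : Matrix (Fin a) (Fin b) ℝ}
    (hA : A ∈ colSparse a b k ∩ rowSparse a b p) :
    c • A ∈ colSparse a b k ∩ rowSparse a b p := by
  obtain ⟨h1, h2⟩ := hA
  constructor
  · intro l
    refine le_trans (Set.ncard_le_ncard ?_ (Set.toFinite _)) (h1 l)
    intro i hi
    simp only [Set.mem_setOf_eq, Matrix.smul_apply, smul_eq_mul] at hi ⊢
    intro h0; exact hi (by rw [h0, mul_zero])
  · refine le_trans (Set.ncard_le_ncard ?_ (Set.toFinite _)) h2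
    rintro i ⟨l, hl⟩
    refine ⟨l, ?_⟩
    simp only [Matrix.smul_apply, smul_eq_mul] at hl
    intro h0; exact hl (by rw [h0, mul_zero])

theorem stmt_10 (m n L k p : ℕ) (hm : 0 < m) (hn : 0 < n) (hL : 0 < L)
    (hk : 0 < k) (hp : 0 < p)
    (Φ : Matrix (Fin m) (Fin n) ℝ) (Y : Matrix (Fin m) (Fin L) ℝ)
    (hnull : {Θ : Matrix (Fin n) (Fin L) ℝ | Φ * Θ = 0} ∩ colSparse n L k ∩ rowSparse n L p
      = {0})
    (X : ℕ → Matrix (Fin n) (Fin L) ℝ)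
    (hX : ∀ i, X i ∈ colSparse n L k ∩ rowSparse n L p)
    (hobj : ∀ i, frob (Y - Φ * X i) ≤ frob Y) :
    (∃ C : ℝ, ∀ i, frob (X i) ≤ C) ∧
    (∃ (φ : ℕ → ℕ) (Xstar : Matrix (Fin n) (Fin L) ℝ), StrictMono φ ∧
        Filter.Tendsto (X ∘ φ) Filter.atTop (nhds Xstar)) ∧
    (∀ (φ : ℕ → ℕ) (Xstar : Matrix (Fin n) (Fin L) ℝ), StrictMono φ →
        Filter.Tendsto (X ∘ φ) Filter.atTop (nhds Xstar) →
          Xstar ∈ colSparse n L k ∩ rowSparse n L p ∧ frob (Y - Φ * Xstar) ≤ frob Y) := by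
  classical
  have hSclosed : IsClosed (colSparse n L k ∩ rowSparse n L p) :=
    (colSparse_closed n L k).inter (rowSparse_closed n L p)
  -- bound on frob (Φ * X i)
  have hΦX : ∀ i, frob (Φ * X i) ≤ 2 * frob Y := by
    intro i
    have h1 : Y - (Y - Φ * X i) = Φ * X i := sub_sub_cancel _ _
    calc frob (Φ * X i) = frob (Y - (Y - Φ * X i)) := by rw [h1]
      _ ≤ frob Y + frob (Y - Φ * X i) := frob_sub_le _ _
      _ ≤ frob Y + frob Y := by linarith [hobj i]
      _ = 2 * frob Y := by ring
  -- Step 1: boundedness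
  have key : ∃ C : ℝ, ∀ i, frob (X i) ≤ C := by
    by_contra h
    push_neg at h
    have hch : ∀ j : ℕ, ∃ ij, (j : ℝ) < frob (X ij) := fun j => h j
    choose ι hι using hch
    set N : ℕ → ℝ := fun j => frob (X (ι j)) with hN
    have hNpos : ∀ j, 0 < N j := fun j => lt_of_le_of_lt (Nat.cast_nonneg j) (hι j)
    set Z : ℕ → Matrix (Fin n) (Fin L) ℝ := fun j => (N j)⁻¹ • X (ι j) with hZ
    have hfrobZ : ∀ j, frob (Z j) = 1 := by
      intro j
      rw [hZ]
      simp only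
      rw [frob_smul, abs_inv, abs_of_pos (hNpos j)]
      exact inv_mul_cancel₀ (hNpos j).ne'
    have hbd : ∀ j, eMat (Z j) ∈ Metric.closedBall (0 : EuclideanSpace ℝ (Fin n × Fin L)) 1 := by
      intro j
      rw [Metric.mem_closedBall, dist_zero_right, ← frob_eq_norm, hfrobZ]
    obtain ⟨z, -, φ, hφ, hz⟩ := tendsto_subseq_of_bounded Metric.isBounded_closedBall hbd
    set Zs : Matrix (Fin n) (Fin L) ℝ := eInv z with hZs
    have hZtend : Filter.Tendsto (Z ∘ φ) Filter.atTop (nhds Zs) := by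
      have := (eInv_continuous.tendsto z).comp hz
      simpa [Function.comp_def, eInv_eMat] using this
    have hZsMem : Zs ∈ colSparse n L k ∩ rowSparse n L p :=
      hSclosed.mem_of_tendsto hZtend
        (Filter.Eventually.of_forall fun j => smul_mem_sparse _ (hX (ι (φ j))))
    have h1 : Filter.Tendsto (fun j => frob (Z (φ j))) Filter.atTop (nhds (frob Zs)) :=
      (frob_continuous.tendsto Zs).comp hZtend
    have hfrobZs : frob Zs = 1 :=
      tendsto_nhds_unique h1 (by simpa [hfrobZ] using
        (tendsto_const_nhds : Filter.Tendsto (fun _ : ℕ => (1:ℝ)) Filter.atTop (nhds 1)))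
    have hmul : Filter.Tendsto (fun j => Φ * Z (φ j)) Filter.atTop (nhds (Φ * Zs)) :=
      ((mulPhi_continuous Φ).tendsto Zs).comp hZtend
    have hfm : Filter.Tendsto (fun j => frob (Φ * Z (φ j))) Filter.atTop
        (nhds (frob (Φ * Zs))) := (frob_continuous.tendsto _).comp hmul
    have hbound : ∀ j : ℕ, 1 ≤ j → frob (Φ * Z (φ j)) ≤ (j : ℝ)⁻¹ * (2 * frob Y) := by
      intro j hj
      have hjpos : (0 : ℝ) < (j : ℝ) := by exact_mod_cast hj
      have hφj : (j : ℝ) ≤ (φ j : ℝ) := by exact_mod_cast hφ.le_apply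
      have hNgt : (j : ℝ) < N (φ j) := lt_of_le_of_lt hφj (hι (φ j))
      have heq : frob (Φ * Z (φ j)) = (N (φ j))⁻¹ * frob (Φ * X (ι (φ j))) := by
        rw [hZ]
        simp only
        rw [Matrix.mul_smul, frob_smul, abs_inv, abs_of_pos (hNpos (φ j))]
      rw [heq]
      have hinv : (N (φ j))⁻¹ ≤ (j : ℝ)⁻¹ := by
        apply inv_anti₀ hjpos hNgt.le
      have h2Y : 0 ≤ 2 * frob Y := by linarith [frob_nonneg Y]
      calc (N (φ j))⁻¹ * frob (Φ * X (ι (φ j))) ≤ (N (φ j))⁻¹ * (2 * frob Y) := by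
            exact mul_le_mul_of_nonneg_left (hΦX _) (inv_nonneg.2 (hNpos _).le)
        _ ≤ (j : ℝ)⁻¹ * (2 * frob Y) := mul_le_mul_of_nonneg_right hinv h2Y
    have hg0 : Filter.Tendsto (fun j : ℕ => (j : ℝ)⁻¹ * (2 * frob Y)) Filter.atTop (nhds 0) := by
      have := (tendsto_inv_atTop_zero).comp (tendsto_natCast_atTop_atTop (R := ℝ))
      simpa using this.mul_const (2 * frob Y)
    have hsq : Filter.Tendsto (fun j => frob (Φ * Z (φ j))) Filter.atTop (nhds 0) := by
      apply squeeze_zero' (Filter.Eventually.of_forall fun j => frob_nonneg _) ?_ hg0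
      filter_upwards [Filter.eventually_ge_atTop 1] with j hj
      exact hbound j hj
    have hΦZs : Φ * Zs = 0 := frob_eq_zero (tendsto_nhds_unique hfm hsq)
    have hZs0 : Zs = 0 := by
      have : Zs ∈ ({0} : Set (Matrix (Fin n) (Fin L) ℝ)) := by
        rw [← hnull]
        exact ⟨⟨hΦZs, hZsMem.1⟩, hZsMem.2⟩
      simpa using this
    rw [hZs0] at hfrobZs
    simp [frob] at hfrobZs
  obtain ⟨C, hC⟩ := key
  have hC0 : 0 ≤ C := le_trans (frob_nonneg (X 0)) (hC 0)
  refine ⟨⟨C, hC⟩, ?_, ?_⟩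
  · -- Step 2: convergent subsequence
    have hbd : ∀ i, eMat (X i) ∈ Metric.closedBall (0 : EuclideanSpace ℝ (Fin n × Fin L)) C := by
      intro i
      rw [Metric.mem_closedBall, dist_zero_right, ← frob_eq_norm]
      exact hC i
    obtain ⟨z, -, φ, hφ, hz⟩ := tendsto_subseq_of_bounded Metric.isBounded_closedBall hbd
    refine ⟨φ, eInv z, hφ, ?_⟩
    have := (eInv_continuous.tendsto z).comp hz
    simpa [Function.comp_def, eInv_eMat] using this
  · -- Step 3: limit properties
    intro φ Xstar hφ htend
    constructor
    · exact hSclosed.mem_of_tendsto htend (Filter.Eventually.of_forall fun j => hX (φ j))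
    · have hcont : Continuous (fun A : Matrix (Fin n) (Fin L) ℝ => frob (Y - Φ * A)) :=
        frob_continuous.comp (continuous_const.sub (mulPhi_continuous Φ))
      have := (hcont.tendsto Xstar).comp htend
      exact le_of_tendsto this (Filter.Eventually.of_forall fun j => hobj (φ j))
end
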